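/- Let G be a spanning subgraph of K_{n,n} that is C_4-saturated relative to K_{n,n}, with partite sets X and Y, and let S_X ⊆ X, S_Y ⊆ Y be sets with |S_X|, |S_Y| ≥ cn such that every vertex of G has at most d√n neighbors in S_X ∪ S_Y. Then G contains at least c²n² − cdn^{3/2} paths on 4 vertices with one endpoint in S_X and the other in S_Y. -/

import Mathlib

/-- The graph obtained from `G` by adding the edge `uv`. -/
def addEdge {V : Type*} (G : SimpleGraph V) (u v : V) : SimpleGraph V :=
  G ⊔ SimpleGraph.fromEdgeSet {s(u, v)}

/-- `G` contains a cycle on 4 vertices as a subgraph. -/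
def HasC4 {V : Type*} (G : SimpleGraph V) : Prop :=
  ∃ a b c d : V, a ≠ b ∧ a ≠ c ∧ a ≠ d ∧ b ≠ c ∧ b ≠ d ∧ c ≠ d ∧
    G.Adj a b ∧ G.Adj b c ∧ G.Adj c d ∧ G.Adj d a

/-- `G` is a spanning subgraph of `K_{n,n}` that is `C_4`-saturated relative to `K_{n,n}`. -/
def C4SatBip {n : ℕ} (G : SimpleGraph (Fin n ⊕ Fin n)) : Prop :=
  (∀ x y : Fin n, ¬ G.Adj (.inl x) (.inl y)) ∧
  (∀ x y : Fin n, ¬ G.Adj (.inr x) (.inr y)) ∧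
  ¬ HasC4 G ∧
  ∀ (x y : Fin n), ¬ G.Adj (.inl x) (.inr y) → HasC4 (addEdge G (.inl x) (.inr y))

/-- In a `C_4`-saturated spanning subgraph of `K_{n,n}` with sets `S_X, S_Y` of size at
least `cn` such that every vertex has at most `d√n` neighbors in `S_X ∪ S_Y`, there are at
least `c²n² - cdn^{3/2}` paths on 4 vertices with one endpoint in `S_X` and the other in
`S_Y`. -/
lemma addEdge_adj {V : Type*} {G : SimpleGraph V} {u v a b : V}
    (h : (addEdge G u v).Adj a b) :
    G.Adj a b ∨ (a = u ∧ b = v) ∨ (a = v ∧ b = u) := by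
  simp only [addEdge, SimpleGraph.sup_adj, SimpleGraph.fromEdgeSet_adj, Set.mem_singleton_iff,
    Sym2.eq, Sym2.rel_iff', Prod.mk.injEq, Prod.swap_prod_mk] at h
  tauto

lemma exists_path {n : ℕ} {G : SimpleGraph (Fin n ⊕ Fin n)} (hsat : C4SatBip G)
    {x y : Fin n} (hna : ¬ G.Adj (.inl x) (.inr y)) :
    ∃ a b : Fin n ⊕ Fin n, G.Adj (.inl x) a ∧ G.Adj a b ∧ G.Adj b (.inr y) ∧
      Sum.inl x ≠ b ∧ Sum.inr y ≠ a := by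
  obtain ⟨hX, hY, hnc, hs⟩ := hsat
  obtain ⟨a, b, c, e, hab, hac, hae, hbc, hbe, hce, e1, e2, e3, e4⟩ := hs x y hna
  replace e1 := addEdge_adj e1
  replace e2 := addEdge_adj e2
  replace e3 := addEdge_adj e3
  replace e4 := addEdge_adj e4
  rcases e1 with e1 | h1
  · rcases e2 with e2 | h2
    · rcases e3 with e3 | h3
      · rcases e4 with e4 | h4
        · exact absurd ⟨a, b, c, e, hab, hac, hae, hbc, hbe, hce, e1, e2, e3, e4⟩ hnc
        · rcases h4 with ⟨rfl, rfl⟩ | ⟨rfl, rfl⟩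
          · exact ⟨c, b, e3.symm, e2.symm, e1.symm, hbe.symm, hac⟩
          · exact ⟨b, c, e1, e2, e3, hac, hbe.symm⟩
      · have e4' : G.Adj e a := by
          rcases e4 with e4 | h4
          · exact e4
          · rcases h3 with ⟨rfl, rfl⟩ | ⟨rfl, rfl⟩ <;>
              rcases h4 with ⟨h4, h4'⟩ | ⟨h4, h4'⟩ <;> simp_all
        rcases h3 with ⟨rfl, rfl⟩ | ⟨rfl, rfl⟩
        · exact ⟨b, a, e2.symm, e1.symm, e4'.symm, hac.symm, hbe.symm⟩
        · exact ⟨a, b, e4', e1, e2, hbe.symm, hac.symm⟩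
    · have e3' : G.Adj c e := by
        rcases e3 with e3 | h3
        · exact e3
        · rcases h2 with ⟨rfl, rfl⟩ | ⟨rfl, rfl⟩ <;>
            rcases h3 with ⟨h3, h3'⟩ | ⟨h3, h3'⟩ <;> simp_all
      have e4' : G.Adj e a := by
        rcases e4 with e4 | h4
        · exact e4
        · rcases h2 with ⟨rfl, rfl⟩ | ⟨rfl, rfl⟩ <;>
            rcases h4 with ⟨h4, h4'⟩ | ⟨h4, h4'⟩ <;> simp_all
      rcases h2 with ⟨rfl, rfl⟩ | ⟨rfl, rfl⟩
      · exact ⟨a, e, e1.symm, e4'.symm, e3'.symm, hbe, hac.symm⟩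
      · exact ⟨e, a, e3', e4', e1, hac.symm, hbe⟩
  · have e2' : G.Adj b c := by
      rcases e2 with e2 | h2
      · exact e2
      · rcases h1 with ⟨rfl, rfl⟩ | ⟨rfl, rfl⟩ <;>
          rcases h2 with ⟨h2, h2'⟩ | ⟨h2, h2'⟩ <;> simp_all
    have e3' : G.Adj c e := by
      rcases e3 with e3 | h3
      · exact e3
      · rcases h1 with ⟨rfl, rfl⟩ | ⟨rfl, rfl⟩ <;>
          rcases h3 with ⟨h3, h3'⟩ | ⟨h3, h3'⟩ <;> simp_all
    have e4' : G.Adj e a := by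
      rcases e4 with e4 | h4
      · exact e4
      · rcases h1 with ⟨rfl, rfl⟩ | ⟨rfl, rfl⟩ <;>
          rcases h4 with ⟨h4, h4'⟩ | ⟨h4, h4'⟩ <;> simp_all
    rcases h1 with ⟨rfl, rfl⟩ | ⟨rfl, rfl⟩
    · exact ⟨e, c, e4'.symm, e3'.symm, e2'.symm, hac, hbe⟩
    · exact ⟨c, e, e2', e3', e4', hbe, hac⟩

theorem stmt16 (n : ℕ) (c d : ℝ) (hc : 0 < c) (hd : 0 < d)
    (G : SimpleGraph (Fin n ⊕ Fin n)) (hsat : C4SatBip G)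
    (SX SY : Finset (Fin n))
    (hSX : c * n ≤ SX.card) (hSY : c * n ≤ SY.card)
    (hdeg : ∀ v : Fin n ⊕ Fin n,
      ((G.neighborSet v ∩ (Sum.inl '' (SX : Set (Fin n)) ∪ Sum.inr '' (SY : Set (Fin n)))).ncard : ℝ)
        ≤ d * Real.sqrt n) :
    c ^ 2 * n ^ 2 - c * d * (n : ℝ) ^ ((3 : ℝ) / 2) ≤
      ({q : Fin n × (Fin n ⊕ Fin n) × (Fin n ⊕ Fin n) × Fin n |
          q.1 ∈ SX ∧ q.2.2.2 ∈ SY ∧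
          G.Adj (.inl q.1) q.2.1 ∧ G.Adj q.2.1 q.2.2.1 ∧ G.Adj q.2.2.1 (.inr q.2.2.2) ∧
          Sum.inl q.1 ≠ q.2.2.1 ∧ Sum.inr q.2.2.2 ≠ q.2.1}.ncard : ℝ) := by
  classical
  set Q : Set (Fin n × (Fin n ⊕ Fin n) × (Fin n ⊕ Fin n) × Fin n) :=
    {q | q.1 ∈ SX ∧ q.2.2.2 ∈ SY ∧
      G.Adj (.inl q.1) q.2.1 ∧ G.Adj q.2.1 q.2.2.1 ∧ G.Adj q.2.2.1 (.inr q.2.2.2) ∧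
      Sum.inl q.1 ≠ q.2.2.1 ∧ Sum.inr q.2.2.2 ≠ q.2.1} with hQ
  rcases Nat.eq_zero_or_pos n with rfl | hn
  · have : ((0:ℕ):ℝ) ^ ((3:ℝ)/2) = 0 := by
      rw [Nat.cast_zero, Real.zero_rpow (by norm_num)]
    rw [this]
    have : (0:ℝ) ≤ Q.ncard := Nat.cast_nonneg _
    push_cast
    nlinarith
  haveI : NeZero n := ⟨hn.ne'⟩
  have hnn : (0:ℝ) ≤ (n:ℝ) := Nat.cast_nonneg n
  set s := Real.sqrt n with hsdef
  have hs0 : 0 ≤ s := Real.sqrt_nonneg _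
  have hss : s * s = n := Real.mul_self_sqrt hnn
  -- the finsets of adjacent / nonadjacent pairs
  set P : Finset (Fin n × Fin n) :=
    (SX ×ˢ SY).filter (fun p => ¬ G.Adj (.inl p.1) (.inr p.2)) with hP
  set A : Finset (Fin n × Fin n) :=
    (SX ×ˢ SY).filter (fun p => G.Adj (.inl p.1) (.inr p.2)) with hA
  -- injection from P into Q
  have hQfin : Q.Finite := Set.toFinite _
  set f : Fin n × Fin n → Fin n × (Fin n ⊕ Fin n) × (Fin n ⊕ Fin n) × Fin n :=
    fun p => if h : ¬ G.Adj (.inl p.1) (.inr p.2) then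
        (p.1, (exists_path hsat h).choose, (exists_path hsat h).choose_spec.choose, p.2)
      else (p.1, default, default, p.2) with hf
  have hmaps : ∀ p ∈ (P : Set (Fin n × Fin n)), f p ∈ Q := by
    intro p hp
    simp only [hP, Finset.coe_filter, Set.mem_setOf_eq, Finset.mem_product] at hp
    obtain ⟨⟨h1, h2⟩, h3⟩ := hp
    have spec := (exists_path hsat h3).choose_spec.choose_spec
    simp only [hf, dif_pos h3, hQ, Set.mem_setOf_eq]
    exact ⟨h1, h2, spec.1, spec.2.1, spec.2.2.1, spec.2.2.2.1, spec.2.2.2.2⟩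
  have hinj : Set.InjOn f (P : Set (Fin n × Fin n)) := by
    intro p _ q _ hpq
    have h1 : (f p).1 = (f q).1 := by rw [hpq]
    have h2 : (f p).2.2.2 = (f q).2.2.2 := by rw [hpq]
    simp only [hf] at h1 h2
    split_ifs at h1 h2 <;> exact Prod.ext h1 h2
  have hcard : (P.card : ℝ) ≤ (Q.ncard : ℝ) := by
    have := Set.ncard_le_ncard_of_injOn f hmaps hinj hQfin
    rw [Set.ncard_coe_finset] at this
    exact_mod_cast this
  -- bound on A
  have hAle : (A.card : ℝ) ≤ SX.card * (d * s) := by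
    have hfib : A.card = ∑ x ∈ SX, (A.filter (fun p => p.1 = x)).card :=
      Finset.card_eq_sum_card_fiberwise (by
        intro p hp
        exact (Finset.mem_product.1 (Finset.mem_filter.1 hp).1).1)
    have hfible : ∀ x ∈ SX, ((A.filter (fun p => p.1 = x)).card : ℝ) ≤ d * s := by
      intro x _
      set T : Finset (Fin n) := SY.filter (fun y => G.Adj (.inl x) (.inr y)) with hT
      have h1 : (A.filter (fun p => p.1 = x)).card ≤ T.card := by
        apply Finset.card_le_card_of_injOn (fun p => p.2)
        · intro p hp
          replace hp : p ∈ A.filter (fun p => p.1 = x) := hp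
          simp only [hA, Finset.mem_filter, Finset.mem_product] at hp
          obtain ⟨⟨⟨_, hy⟩, hadj⟩, hx⟩ := hp
          show p.2 ∈ T
          simp only [hT, Finset.mem_filter]
          exact ⟨hy, hx ▸ hadj⟩
        · intro p hp q hq hpq
          simp only [Finset.coe_filter, Set.mem_setOf_eq] at hp hq
          exact Prod.ext (hp.2.trans hq.2.symm) hpq
      have h2 : (T.card : ℝ) ≤ d * s := by
        have himg : ((T.image Sum.inr : Finset (Fin n ⊕ Fin n)) : Set (Fin n ⊕ Fin n)) ⊆
            G.neighborSet (.inl x) ∩ (Sum.inl '' (SX : Set (Fin n)) ∪ Sum.inr '' (SY : Set (Fin n))) := by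
          intro v hv
          simp only [Finset.coe_image, Set.mem_image, Finset.mem_coe, hT,
            Finset.mem_filter] at hv
          obtain ⟨y, ⟨hy, hadj⟩, rfl⟩ := hv
          exact ⟨hadj, Or.inr ⟨y, hy, rfl⟩⟩
        have := Set.ncard_le_ncard himg (Set.toFinite _)
        rw [Set.ncard_coe_finset, Finset.card_image_of_injective _ Sum.inr_injective] at this
        calc (T.card : ℝ) ≤ _ := Nat.cast_le.2 this
          _ ≤ d * s := hdeg (.inl x)
      calc ((A.filter (fun p => p.1 = x)).card : ℝ) ≤ T.card := Nat.cast_le.2 h1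
        _ ≤ d * s := h2
    calc (A.card : ℝ) = ∑ x ∈ SX, ((A.filter (fun p => p.1 = x)).card : ℝ) := by
          rw [hfib]; push_cast; ring
      _ ≤ SX.card • (d * s) := Finset.sum_le_card_nsmul _ _ _ hfible
      _ = SX.card * (d * s) := by rw [nsmul_eq_mul]
  -- P.card + A.card = |SX| * |SY|
  have hPA : A.card + P.card = SX.card * SY.card := by
    rw [hA, hP, Finset.card_filter_add_card_filter_not, Finset.card_product]
  have hPcard : (P.card : ℝ) = SX.card * SY.card - A.card := by
    have : (A.card : ℝ) + P.card = SX.card * SY.card := by exact_mod_cast hPA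
    linarith
  -- rewrite the power
  have hpow : (n:ℝ) ^ ((3:ℝ)/2) = n * s := by
    rw [show (3:ℝ)/2 = 1 + 1/2 by norm_num, Real.rpow_add (by positivity), Real.rpow_one,
      hsdef, ← Real.sqrt_eq_rpow]
  rw [hpow]
  have hQ0 : (0:ℝ) ≤ (Q.ncard : ℝ) := Nat.cast_nonneg _
  have hsx0 : (0:ℝ) ≤ SX.card := Nat.cast_nonneg _
  rcases le_or_gt (d * s) (SY.card : ℝ) with h | h
  · nlinarith [mul_nonneg (sub_nonneg.2 hSX) (sub_nonneg.2 h),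
      mul_nonneg (mul_nonneg hc.le hnn) (sub_nonneg.2 hSY)]
  · nlinarith [mul_nonneg (mul_nonneg hc.le hnn) (by linarith : (0:ℝ) ≤ d * s - c * n)]
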